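/- Let K be a field, let A be an n₁×n₂ matrix, B an n₂×n₃ matrix, and C an n₁×n₃ matrix over K satisfying A·B = 2·C. Let q ∈ K be nonzero, set z = q + q⁻¹, and assume z ≠ 0 and that the matrices z·E − z⁻¹·A·Aᵀ (size n₁) and z·E − z⁻¹·Bᵀ·B (size n₃) are invertible. Let M be the (n₁+n₂+n₃)×(n₁+n₂+n₃) block matrix M = [[z·E, −q·A, q·C], [−q⁻¹·Aᵀ, z·E, −q·B], [q⁻¹·Cᵀ, −q⁻¹·Bᵀ, z·E]]. Then det M = z^{n₂} · det(z·E − z⁻¹·A·Aᵀ) · det(z·E − z⁻¹·Bᵀ·B) · det(E − (4·z⁻² − 1)·Cᵀ·(z·E − z⁻¹·A·Aᵀ)⁻¹·C·(z·E − z⁻¹·Bᵀ·B)⁻¹). -/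

import Mathlib

open Matrix

private def gzEquiv (n₁ n₂ n₃ : ℕ) :
    ((Fin n₁ ⊕ Fin n₃) ⊕ Fin n₂) ≃ ((Fin n₁ ⊕ Fin n₂) ⊕ Fin n₃) where
  toFun := Sum.elim
    (Sum.elim (fun a => Sum.inl (Sum.inl a)) Sum.inr)
    (fun b => Sum.inl (Sum.inr b))
  invFun := Sum.elim
    (Sum.elim (fun a => Sum.inl (Sum.inl a)) (fun b => Sum.inr b))
    (fun c => Sum.inl (Sum.inr c))
  left_inv := by rintro ((a | c) | b) <;> rfl
  right_inv := by rintro ((a | b) | c) <;> rfl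

/-- The factorization formula of Example 8.  `M` is the block matrix
`[[z·E, -q·A, q·C], [-q⁻¹·Aᵀ, z·E, -q·B], [q⁻¹·Cᵀ, -q⁻¹·Bᵀ, z·E]]` built from
matrices satisfying the Gusein-Zade relation `A·B = 2·C`, with `z = q + q⁻¹ ≠ 0`
and both `z·E - z⁻¹·A·Aᵀ` and `z·E - z⁻¹·Bᵀ·B` invertible.  Then
`det M = z^{n₂} · det(z·E - z⁻¹·A·Aᵀ) · det(z·E - z⁻¹·Bᵀ·B)
  · det(E - (4·z⁻² - 1)·Cᵀ·(z·E - z⁻¹·A·Aᵀ)⁻¹·C·(z·E - z⁻¹·Bᵀ·B)⁻¹)`. -/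
theorem guseinZade_factorization {K : Type*} [Field K]
    (n₁ n₂ n₃ : ℕ)
    (A : Matrix (Fin n₁) (Fin n₂) K)
    (B : Matrix (Fin n₂) (Fin n₃) K)
    (C : Matrix (Fin n₁) (Fin n₃) K)
    (hABC : A * B = (2 : K) • C)
    (q : K) (hq : q ≠ 0) (z : K) (hz : z = q + q⁻¹) (hz0 : z ≠ 0)
    (hinv₁ : IsUnit (z • (1 : Matrix (Fin n₁) (Fin n₁) K) - z⁻¹ • (A * Aᵀ)))
    (hinv₃ : IsUnit (z • (1 : Matrix (Fin n₃) (Fin n₃) K) - z⁻¹ • (Bᵀ * B)))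
    (M : Matrix ((Fin n₁ ⊕ Fin n₂) ⊕ Fin n₃) ((Fin n₁ ⊕ Fin n₂) ⊕ Fin n₃) K)
    (hM : M = Matrix.fromBlocks
      (Matrix.fromBlocks (z • (1 : Matrix (Fin n₁) (Fin n₁) K)) (-(q • A))
        (-(q⁻¹ • Aᵀ)) (z • (1 : Matrix (Fin n₂) (Fin n₂) K)))
      (Matrix.fromRows (q • C) (-(q • B)))
      (Matrix.fromCols (q⁻¹ • Cᵀ) (-(q⁻¹ • Bᵀ)))
      (z • (1 : Matrix (Fin n₃) (Fin n₃) K))) :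
    M.det = z ^ n₂
      * (z • (1 : Matrix (Fin n₁) (Fin n₁) K) - z⁻¹ • (A * Aᵀ)).det
      * (z • (1 : Matrix (Fin n₃) (Fin n₃) K) - z⁻¹ • (Bᵀ * B)).det
      * ((1 : Matrix (Fin n₃) (Fin n₃) K)
          - (4 * (z⁻¹) ^ 2 - 1) •
            (Cᵀ * (z • (1 : Matrix (Fin n₁) (Fin n₁) K) - z⁻¹ • (A * Aᵀ))⁻¹ * C *
              (z • (1 : Matrix (Fin n₃) (Fin n₃) K) - z⁻¹ • (Bᵀ * B))⁻¹)).det := by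
  set P : Matrix (Fin n₁) (Fin n₁) K :=
    z • (1 : Matrix (Fin n₁) (Fin n₁) K) - z⁻¹ • (A * Aᵀ) with hPdef
  set Q : Matrix (Fin n₃) (Fin n₃) K :=
    z • (1 : Matrix (Fin n₃) (Fin n₃) K) - z⁻¹ • (Bᵀ * B) with hQdef
  have e := gzEquiv n₁ n₂ n₃
  -- reindex M
  have hdet : M.det = ((M.submatrix (gzEquiv n₁ n₂ n₃) (gzEquiv n₁ n₂ n₃))).det :=
    (det_submatrix_equiv_self (gzEquiv n₁ n₂ n₃) M).symm
  have hMe : M.submatrix (gzEquiv n₁ n₂ n₃) (gzEquiv n₁ n₂ n₃) =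
      Matrix.fromBlocks
        (Matrix.fromBlocks (z • (1 : Matrix (Fin n₁) (Fin n₁) K)) (q • C)
          (q⁻¹ • Cᵀ) (z • (1 : Matrix (Fin n₃) (Fin n₃) K)))
        (Matrix.fromRows (-(q • A)) (-(q⁻¹ • Bᵀ)))
        (Matrix.fromCols (-(q⁻¹ • Aᵀ)) (-(q • B)))
        (z • (1 : Matrix (Fin n₂) (Fin n₂) K)) := by
    subst hM
    ext i j
    rcases i with (a | c) | b <;> rcases j with (a' | c') | b' <;> rfl
  -- invertibility data
  haveI iz : Invertible (z • (1 : Matrix (Fin n₂) (Fin n₂) K)) :=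
    ⟨z⁻¹ • (1 : Matrix (Fin n₂) (Fin n₂) K),
      by rw [smul_mul_assoc, Matrix.one_mul, smul_smul, inv_mul_cancel₀ hz0, one_smul],
      by rw [smul_mul_assoc, Matrix.one_mul, smul_smul, mul_inv_cancel₀ hz0, one_smul]⟩
  haveI iP : Invertible P := hinv₁.invertible
  have hinvz : ⅟ (z • (1 : Matrix (Fin n₂) (Fin n₂) K)) =
      z⁻¹ • (1 : Matrix (Fin n₂) (Fin n₂) K) := invOf_eq_right_inv
    (by rw [Matrix.smul_mul, Matrix.one_mul, smul_smul, mul_inv_cancel₀ hz0, one_smul])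
  -- the middle Schur complement
  have hYZ : Matrix.fromRows (-(q • A)) (-(q⁻¹ • Bᵀ)) *
        ⅟ (z • (1 : Matrix (Fin n₂) (Fin n₂) K)) *
        Matrix.fromCols (-(q⁻¹ • Aᵀ)) (-(q • B)) =
      Matrix.fromBlocks (z⁻¹ • (A * Aᵀ)) ((z⁻¹ * (2 * q ^ 2)) • C)
        ((z⁻¹ * (2 * q⁻¹ ^ 2)) • Cᵀ) (z⁻¹ • (Bᵀ * B)) := by
    have hBA : Bᵀ * Aᵀ = (2 : K) • Cᵀ := by
      rw [← Matrix.transpose_mul, hABC, Matrix.transpose_smul]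
    have h1 : q • A * (q⁻¹ • Aᵀ) = A * Aᵀ := by
      rw [Matrix.smul_mul, Matrix.mul_smul, smul_smul, mul_inv_cancel₀ hq, one_smul]
    have h2 : q • A * (q • B) = (2 * q ^ 2) • C := by
      rw [Matrix.smul_mul, Matrix.mul_smul, hABC, smul_smul, smul_smul]
      congr 1
      ring
    have h3 : q⁻¹ • Bᵀ * (q⁻¹ • Aᵀ) = (2 * q⁻¹ ^ 2) • Cᵀ := by
      rw [Matrix.smul_mul, Matrix.mul_smul, hBA, smul_smul, smul_smul]
      congr 1
      ring
    have h4 : q⁻¹ • Bᵀ * (q • B) = Bᵀ * B := by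
      rw [Matrix.smul_mul, Matrix.mul_smul, smul_smul, inv_mul_cancel₀ hq, one_smul]
    rw [hinvz, Matrix.mul_smul, Matrix.mul_one, Matrix.smul_mul,
      fromRows_mul_fromCols, fromBlocks_smul]
    simp only [Matrix.neg_mul, Matrix.mul_neg, neg_neg]
    rw [h1, h2, h3, h4, smul_smul, smul_smul]
  have hsub : Matrix.fromBlocks (z • (1 : Matrix (Fin n₁) (Fin n₁) K)) (q • C)
        (q⁻¹ • Cᵀ) (z • (1 : Matrix (Fin n₃) (Fin n₃) K)) -
        Matrix.fromRows (-(q • A)) (-(q⁻¹ • Bᵀ)) *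
          ⅟ (z • (1 : Matrix (Fin n₂) (Fin n₂) K)) *
          Matrix.fromCols (-(q⁻¹ • Aᵀ)) (-(q • B)) =
      Matrix.fromBlocks P ((q - z⁻¹ * (2 * q ^ 2)) • C)
        ((q⁻¹ - z⁻¹ * (2 * q⁻¹ ^ 2)) • Cᵀ) Q := by
    rw [hYZ, hPdef, hQdef]
    ext i j
    rcases i with a | c <;> rcases j with a' | c' <;>
      simp [Matrix.fromBlocks, sub_smul] <;> ring
  -- second Schur complement
  have hinvP : ⅟ P = P⁻¹ := invOf_eq_nonsing_inv P
  have hQu : IsUnit Q.det := (Matrix.isUnit_iff_isUnit_det Q).mp hinv₃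
  have hscal : (q⁻¹ - z⁻¹ * (2 * q⁻¹ ^ 2)) * (q - z⁻¹ * (2 * q ^ 2)) =
      4 * z⁻¹ ^ 2 - 1 := by
    have r1 : q⁻¹ * q = 1 := inv_mul_cancel₀ hq
    have r2 : z⁻¹ * z = 1 := inv_mul_cancel₀ hz0
    linear_combination (1 - 2 * z⁻¹ * q - 2 * z⁻¹ * q⁻¹ + 4 * z⁻¹ ^ 2 * (q⁻¹ * q - 1)
        + 8 * z⁻¹ ^ 2) * r1 - 2 * r2 + 2 * z⁻¹ * hz
  have hfactor : Q - (4 * z⁻¹ ^ 2 - 1) • (Cᵀ * P⁻¹ * C) =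
      ((1 : Matrix (Fin n₃) (Fin n₃) K)
          - (4 * (z⁻¹) ^ 2 - 1) • (Cᵀ * P⁻¹ * C * Q⁻¹)) * Q := by
    rw [Matrix.sub_mul, Matrix.one_mul, Matrix.smul_mul,
      Matrix.mul_assoc (Cᵀ * P⁻¹ * C) Q⁻¹ Q,
      Matrix.nonsing_inv_mul Q hQu, Matrix.mul_one]
  rw [hdet, hMe, Matrix.det_fromBlocks₂₂, hsub, Matrix.det_fromBlocks₁₁, hinvP]
  rw [show (q⁻¹ - z⁻¹ * (2 * q⁻¹ ^ 2)) • Cᵀ * P⁻¹ * ((q - z⁻¹ * (2 * q ^ 2)) • C) =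
      ((q⁻¹ - z⁻¹ * (2 * q⁻¹ ^ 2)) * (q - z⁻¹ * (2 * q ^ 2))) • (Cᵀ * P⁻¹ * C) by
    rw [Matrix.smul_mul, Matrix.smul_mul, Matrix.mul_smul, smul_smul]]
  rw [hscal, hfactor, Matrix.det_mul, Matrix.det_smul, Matrix.det_one, mul_one,
    Fintype.card_fin]
  ring
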